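/- If H is a finite moment graph with structure algebra Z over a field k, then every Z-module M is generically semisimple, i.e. M^0 = ⊕_{x ∈ 𝒱} M^{0,x}, where M^{0,x} is the submodule of M^0 on which each (z_w) ∈ Z acts by multiplication with z_x. -/

import Mathlib

/-- A moment graph over the lattice `X`. -/
structure MomentGraph (X : Type) where
  V : Type
  E : Type
  src : E → V
  tgt : E → V
  label : E → X
  no_loop : ∀ e, src e ≠ tgt e

variable {n : ℕ} {k : Type} [Field k]

/-- The embedding of the lattice `X = ℤⁿ` into `S = Sym(X ⊗ k)`. -/
noncomputable def latEmb (k : Type) [Field k] (n : ℕ) (v : Fin n → ℤ) :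
    MvPolynomial (Fin n) k :=
  ∑ i, MvPolynomial.C (v i : k) * MvPolynomial.X i

/-- The structure algebra `Z(H)` as an `S`-subalgebra of `∏_{x ∈ V} S`. -/
noncomputable def structAlgebra (G : MomentGraph (Fin n → ℤ)) (k : Type) [Field k] :
    Subalgebra (MvPolynomial (Fin n) k) (G.V → MvPolynomial (Fin n) k) where
  carrier := {z | ∀ e, z (G.src e) - z (G.tgt e) ∈ Ideal.span {latEmb k n (G.label e)}}
  add_mem' := by
    intro a b ha hb e
    have := Ideal.add_mem _ (ha e) (hb e)
    simpa [add_sub_add_comm] using this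
  mul_mem' := by
    intro a b ha hb e
    have h1 := Ideal.mul_mem_left _ (a (G.src e)) (hb e)
    have h2 := Ideal.mul_mem_right (b (G.tgt e)) _ (ha e)
    have := Ideal.add_mem _ h1 h2
    have heq : a (G.src e) * (b (G.src e) - b (G.tgt e)) +
        (a (G.src e) - a (G.tgt e)) * b (G.tgt e) =
        a (G.src e) * b (G.src e) - a (G.tgt e) * b (G.tgt e) := by ring
    simpa [heq] using this
  algebraMap_mem' := by
    intro r e
    simp

/-- The multiplicative set of all (embedded) nonzero lattice elements; the
localization of `S` at it is `S⁰ = S[α⁻¹ : α ∈ X, α ≠ 0]`. -/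
noncomputable def genericSet (k : Type) [Field k] (n : ℕ) :
    Submonoid (MvPolynomial (Fin n) k) :=
  Submonoid.closure {s | ∃ α : Fin n → ℤ, α ≠ 0 ∧ s = latEmb k n α}

section

variable (k)
variable (G : MomentGraph (Fin n → ℤ))
variable (M : Type) [AddCommGroup M]
  [Module (MvPolynomial (Fin n) k) M]
  [Module (structAlgebra G k) M]
  [IsScalarTower (MvPolynomial (Fin n) k) (structAlgebra G k) M]

/-- The action of an element of the structure algebra as an `S`-linear
endomorphism of `M`. -/
noncomputable def zsmulLin (z : structAlgebra G k) : M →ₗ[MvPolynomial (Fin n) k] M where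
  toFun m := z • m
  map_add' := smul_add z
  map_smul' s m := (smul_comm s z m).symm

/-- The generic stalk `M^{0,x}` of a `Z`-module: the set of elements of
`M⁰ = M ⊗_S S⁰` on which every `(z_w) ∈ Z` acts as multiplication by `z_x`. -/
noncomputable def genStalk (x : G.V) :
    Submodule (MvPolynomial (Fin n) k) (LocalizedModule (genericSet k n) M) where
  carrier := {m | ∀ z : structAlgebra G k,
    LocalizedModule.map (genericSet k n) (zsmulLin k G M z) m = (z.1 x) • m}
  add_mem' := by
    intro a b ha hb z
    simp [ha z, hb z, smul_add]
  zero_mem' := by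
    intro z
    simp
  smul_mem' := by
    intro c a ha z
    simp [ha z, smul_comm c (z.1 x)]


lemma LocalizedModule.map_comp'' {R : Type*} [CommRing R] (S : Submonoid R)
    {M N P : Type*} [AddCommMonoid M] [AddCommMonoid N] [AddCommMonoid P]
    [Module R M] [Module R N] [Module R P] (f : N →ₗ[R] P) (g : M →ₗ[R] N) :
    LocalizedModule.map S (f ∘ₗ g) =
      (LocalizedModule.map S f) ∘ₗ (LocalizedModule.map S g) := by
  ext x
  induction x using LocalizedModule.induction_on with
  | _ m s => simp

set_option maxHeartbeats 2000000 in
set_option synthInstance.maxHeartbeats 1000000 in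
/-- If `H` is a finite moment graph with structure algebra `Z`
over the field `k`, then every `Z`-module `M` is generically semisimple:
`M⁰ = ⊕_{x ∈ 𝒱} M^{0,x}`. -/
theorem generically_semisimple
    [Finite G.V] [Finite G.E] (hnz : ∀ e, G.label e ≠ 0) :
    iSupIndep (fun x : G.V => genStalk k G M x) ∧
    (⨆ x : G.V, genStalk k G M x) = ⊤ := by
  classical
  cases nonempty_fintype G.V
  cases nonempty_fintype G.E
  set S := MvPolynomial (Fin n) k with hS
  set R' := Localization (genericSet k n) with hR'
  set P : S := ∏ e : G.E, latEmb k n (G.label e) with hPdef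
  have hP : P ∈ genericSet k n :=
    prod_mem fun e _ => Submonoid.subset_closure ⟨G.label e, hnz e, rfl⟩
  have hdvd : ∀ e : G.E, latEmb k n (G.label e) ∣ P :=
    fun e => Finset.dvd_prod_of_mem (fun e => latEmb k n (G.label e)) (Finset.mem_univ e)
  have hmem : ∀ x : G.V, (fun w => if w = x then P else 0) ∈ structAlgebra G k := by
    intro x e
    by_cases h1 : G.src e = x
    · have h2 : G.tgt e ≠ x := fun h => G.no_loop e (h1.trans h.symm)
      simp only [h1, if_pos rfl, if_neg h2, sub_zero]
      exact Ideal.mem_span_singleton.mpr (hdvd e)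
    · by_cases h2 : G.tgt e = x
      · simp only [if_neg h1, h2, if_pos rfl, zero_sub]
        exact neg_mem (Ideal.mem_span_singleton.mpr (hdvd e))
      · simp [h1, h2]
  set zx : G.V → structAlgebra G k := fun x => ⟨fun w => if w = x then P else 0, hmem x⟩
    with hzx
  set F : structAlgebra G k →
      (LocalizedModule (genericSet k n) M →ₗ[R'] LocalizedModule (genericSet k n) M) :=
    fun z => LocalizedModule.map (genericSet k n) (zsmulLin k G M z) with hF
  -- multiplicativity of the action
  have hzmul : ∀ z z' : structAlgebra G k,
      zsmulLin k G M (z * z') = (zsmulLin k G M z) ∘ₗ (zsmulLin k G M z') := by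
    intro z z'
    ext m
    exact mul_smul z z' m
  have hFmul : ∀ (z z' : structAlgebra G k) m, F (z * z') m = F z (F z' m) := by
    intro z z' m
    rw [hF]
    simp only
    rw [hzmul, LocalizedModule.map_comp'']
    rfl
  have hzsmul : ∀ (s : S) (z : structAlgebra G k),
      zsmulLin k G M (s • z) = s • zsmulLin k G M z := by
    intro s z
    ext m
    exact smul_assoc s z m
  have hFsmul : ∀ (s : S) (z : structAlgebra G k) m, F (s • z) m = s • F z m := by
    intro s z m
    rw [hF]
    simp only
    rw [hzsmul, map_smul]
    rfl
  -- z * zx x = z_x • zx x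
  have hzzx : ∀ (z : structAlgebra G k) (x : G.V), z * zx x = (z.1 x) • zx x := by
    intro z x
    apply Subtype.ext
    funext w
    show z.1 w * (if w = x then P else 0) = z.1 x • (if w = x then P else 0)
    by_cases h : w = x
    · subst h; simp [smul_eq_mul]
    · simp [h]
  -- image of F (zx x) lies in the stalk at x
  have hstalk : ∀ (x : G.V) (m : LocalizedModule (genericSet k n) M),
      F (zx x) m ∈ genStalk k G M x := by
    intro x m z
    show F z (F (zx x) m) = (z.1 x) • F (zx x) m
    rw [← hFmul, hzzx, hFsmul]
  -- the stalks are stable under scalars from the localization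
  have hclosed : ∀ (x : G.V) (c : R') (m : LocalizedModule (genericSet k n) M),
      m ∈ genStalk k G M x → c • m ∈ genStalk k G M x := by
    intro x c m hm z
    have h1 : F z (c • m) = c • F z m := map_smul (F z) c m
    have h2 : F z m = (z.1 x) • m := hm z
    show F z (c • m) = (z.1 x) • (c • m)
    rw [h1, h2, ← algebraMap_smul R' (z.1 x) m, ← algebraMap_smul R' (z.1 x) (c • m),
      smul_smul, smul_smul, mul_comm]
  -- the sum of the zx is the constant P
  have hzsum : (∑ x : G.V, zx x) = algebraMap S (structAlgebra G k) P := by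
    apply Subtype.ext
    have hc : ((∑ x : G.V, zx x : structAlgebra G k) : G.V → S)
        = ∑ x : G.V, ((zx x : structAlgebra G k) : G.V → S) := by
      exact AddSubmonoidClass.coe_finset_sum _ _
    funext w
    rw [hc]
    simp only [hzx, Finset.sum_apply]
    rw [Finset.sum_eq_single w]
    · simp [Pi.algebraMap_apply]; rfl
    · intro b _ hb
      simp [Ne.symm hb]
    · intro h; exact absurd (Finset.mem_univ w) h
  have hFsum : ∀ m : LocalizedModule (genericSet k n) M,
      (∑ x : G.V, F (zx x) m) = P • m := by
    intro m
    have h1 : (∑ x : G.V, F (zx x)) = LocalizedModule.map (genericSet k n)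
        (∑ x : G.V, zsmulLin k G M (zx x)) := (map_sum _ _ _).symm
    have h2 : (∑ x : G.V, zsmulLin k G M (zx x)) = P • (LinearMap.id (M := M)) := by
      ext m'
      rw [LinearMap.sum_apply]
      show (∑ x : G.V, (zx x) • m') = P • m'
      rw [← Finset.sum_smul, hzsum, algebraMap_smul]
    have h3 : (∑ x : G.V, F (zx x) m) = (∑ x : G.V, F (zx x)) m := by
      rw [LinearMap.sum_apply]
    rw [h3, h1, h2, map_smul]
    simp
  -- the inverse of P in the localization
  have hu : IsUnit (algebraMap S R' P) := IsLocalization.map_units R' ⟨P, hP⟩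
  set c : R' := ↑hu.unit⁻¹ with hc
  have hcP : ∀ m : LocalizedModule (genericSet k n) M, c • (P • m) = m := by
    intro m
    rw [← algebraMap_smul R' P m, smul_smul, hc, IsUnit.val_inv_mul, one_smul]
  constructor
  · rw [iSupIndep_def]
    intro x
    rw [Submodule.disjoint_def]
    intro m hm1 hm2
    have h0 : F (zx x) m = 0 := by
      have hker : (⨆ (y) (_ : y ≠ x), genStalk k G M y) ≤
          (LinearMap.ker (F (zx x))).restrictScalars S := by
        refine iSup₂_le fun y hy m' hm' => ?_
        have h1 : F (zx x) m' = ((zx x).1 y) • m' := hm' (zx x)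
        have h2 : ((zx x).1 y : S) = 0 := if_neg hy
        show F (zx x) m' = 0
        rw [h1, h2, zero_smul]
      exact hker hm2
    have h1 : F (zx x) m = P • m := by
      have := hm1 (zx x)
      have h2 : ((zx x).1 x : S) = P := if_pos rfl
      rw [h2] at this
      exact this
    have : m = c • (P • m) := (hcP m).symm
    rw [this, ← h1, h0, smul_zero]
  · rw [eq_top_iff]
    intro m _
    have h1 : m = ∑ x : G.V, c • F (zx x) m := by
      rw [← Finset.smul_sum, hFsum, hcP]
    rw [h1]
    exact Submodule.sum_mem _ fun x _ =>
      Submodule.mem_iSup_of_mem x (hclosed x c _ (hstalk x m))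

end
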